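/- DF-reduction preserves regularity: if 𝓜 is a regular collection of channel sets and 𝓜 DF-reduces to 𝓜' via some channel ch, then 𝓜' is also a regular collection of channel sets; moreover, the union of the sets in 𝓜' equals the union of the sets in 𝓜 with ch and d ch removed. -/

import Mathlib

/-- `𝓜` DF-reduces to `𝓜'` via channel `ch`: there are two distinct member
occurrences `M₁`, `M₂` in `𝓜` with `ch ∈ M₁` and `d ch ∈ M₂`, and `𝓜'` is
obtained from `𝓜` by removing `M₁` and `M₂` and adding `(M₁ ∪ M₂) \ {ch, d ch}`. -/
def DFStepVia {α : Type*} [DecidableEq α] (d : α → α)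
    (𝓜 𝓜' : Multiset (Finset α)) (ch : α) : Prop :=
  ∃ M₁ M₂ : Finset α, M₁ ∈ 𝓜 ∧ M₂ ∈ 𝓜.erase M₁ ∧ ch ∈ M₁ ∧ d ch ∈ M₂ ∧
    𝓜' = ((M₁ ∪ M₂) \ {ch, d ch}) ::ₘ ((𝓜.erase M₁).erase M₂)

theorem DFStepVia.card_lt {α : Type*} [DecidableEq α] {d : α → α}
    {𝓜 𝓜' : Multiset (Finset α)} {ch : α}
    (h : DFStepVia d 𝓜 𝓜' ch) : Multiset.card 𝓜' < Multiset.card 𝓜 := by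
  obtain ⟨M₁, M₂, h₁, h₂, -, -, rfl⟩ := h
  have c₁ : Multiset.card (𝓜.erase M₁) < Multiset.card 𝓜 :=
    Multiset.card_erase_lt_of_mem h₁
  have c₂ : Multiset.card ((𝓜.erase M₁).erase M₂) < Multiset.card (𝓜.erase M₁) :=
    Multiset.card_erase_lt_of_mem h₂
  rw [Multiset.card_cons]
  omega

/-- A collection `𝓜` of channel sets is regular if its member sets are pairwise
disjoint and, for every channel `ch`, `ch` belongs to the union of the sets in
`𝓜` iff `d ch` does. -/
def Regular {α : Type*} [DecidableEq α] (d : α → α)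
    (𝓜 : Multiset (Finset α)) : Prop :=
  Multiset.Pairwise (fun M₁ M₂ => Disjoint M₁ M₂) 𝓜 ∧
    ∀ ch : α, ch ∈ 𝓜.sup ↔ d ch ∈ 𝓜.sup

/-- `𝓜` is DF-normal if it DF-reduces to no collection. -/
def DFNormal {α : Type*} [DecidableEq α] (d : α → α)
    (𝓜 : Multiset (Finset α)) : Prop :=
  ¬ ∃ 𝓜' ch, DFStepVia d 𝓜 𝓜' ch

/-- `𝓜` is DF-reducible if either every member set of `𝓜` is empty, or `𝓜` is
not DF-normal and every `𝓜'` to which `𝓜` DF-reduces is DF-reducible. -/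
def DFReducible {α : Type*} [DecidableEq α] (d : α → α)
    (𝓜 : Multiset (Finset α)) : Prop :=
  (∀ M ∈ 𝓜, M = ∅) ∨
    ((∃ 𝓜' ch, DFStepVia d 𝓜 𝓜' ch) ∧
      ∀ 𝓜' ch (h : DFStepVia d 𝓜 𝓜' ch), DFReducible d 𝓜')
termination_by Multiset.card 𝓜
decreasing_by exact h.card_lt

/-- DF-reduction preserves regularity, and the union of the resulting
collection equals the union of the original one with `ch` and `d ch`
removed. -/
private lemma mem_msup {α : Type*} [DecidableEq α] {s : Multiset (Finset α)} {a : α} :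
    a ∈ s.sup ↔ ∃ t ∈ s, a ∈ t := by
  induction s using Multiset.induction with
  | empty => simp
  | cons b s ih => simp [Multiset.sup_cons, ih]

private lemma pairwise_cons_iff {α : Type*} {r : α → α → Prop} (hr : Symmetric r)
    {a : α} {s : Multiset α} :
    Multiset.Pairwise r (a ::ₘ s) ↔ (∀ b ∈ s, r a b) ∧ Multiset.Pairwise r s := by
  induction s using Quotient.inductionOn with
  | h l =>
    show Multiset.Pairwise r (a ::ₘ (↑l : Multiset α)) ↔
      (∀ b ∈ (↑l : Multiset α), r a b) ∧ Multiset.Pairwise r (↑l : Multiset α)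
    rw [Multiset.cons_coe, @Multiset.pairwise_coe_iff_pairwise _ _ ⟨fun _ _ h => hr h⟩ _,
      @Multiset.pairwise_coe_iff_pairwise _ _ ⟨fun _ _ h => hr h⟩ _, List.pairwise_cons]
    simp

theorem DFStepVia.regular {α : Type*} [DecidableEq α] (d : α → α)
    (hinv : Function.Involutive d) (hfpf : ∀ ch : α, d ch ≠ ch)
    (𝓜 𝓜' : Multiset (Finset α)) (hne : 𝓜 ≠ 0) (hreg : Regular d 𝓜)
    (ch : α) (hstep : DFStepVia d 𝓜 𝓜' ch) :
    Regular d 𝓜' ∧ 𝓜'.sup = 𝓜.sup \ {ch, d ch} := by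
  obtain ⟨M₁, M₂, h₁, h₂, hch, hdch, rfl⟩ := hstep
  set rest := (𝓜.erase M₁).erase M₂ with hrest
  have h𝓜 : 𝓜 = M₁ ::ₘ M₂ ::ₘ rest := by
    rw [hrest, Multiset.cons_erase h₂, Multiset.cons_erase h₁]
  have hsymm : Symmetric (fun M₁ M₂ : Finset α => Disjoint M₁ M₂) :=
    fun _ _ h => h.symm
  obtain ⟨hpw, hd⟩ := hreg
  rw [h𝓜, pairwise_cons_iff hsymm, pairwise_cons_iff hsymm] at hpw
  obtain ⟨hd1, hd2, hprest⟩ := hpw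
  have hd12 : Disjoint M₁ M₂ := hd1 M₂ (Multiset.mem_cons_self _ _)
  have hd1' : ∀ N ∈ rest, Disjoint M₁ N := fun N hN =>
    hd1 N (Multiset.mem_cons_of_mem hN)
  have hch_rest : ch ∉ rest.sup := by
    rw [mem_msup]
    rintro ⟨N, hN, hchN⟩
    exact (Finset.disjoint_left.1 (hd1' N hN)) hch hchN
  have hdch_rest : d ch ∉ rest.sup := by
    rw [mem_msup]
    rintro ⟨N, hN, hchN⟩
    exact (Finset.disjoint_left.1 (hd2 N hN)) hdch hchN
  have hsup : ((M₁ ∪ M₂) \ {ch, d ch} ::ₘ rest).sup = 𝓜.sup \ {ch, d ch} := by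
    rw [h𝓜]
    ext x
    simp only [Multiset.sup_cons, Finset.mem_union, Finset.mem_sdiff, Finset.sup_eq_union,
      Finset.mem_insert, Finset.mem_singleton]
    constructor
    · rintro (⟨hx, hne⟩ | hx)
      · tauto
      · refine ⟨Or.inr (Or.inr hx), ?_⟩
        rintro (rfl | rfl)
        · exact hch_rest hx
        · exact hdch_rest hx
    · tauto
  refine ⟨⟨?_, ?_⟩, hsup⟩
  · rw [pairwise_cons_iff hsymm]
    refine ⟨fun N hN => ?_, hprest⟩
    exact Finset.disjoint_of_subset_left (Finset.sdiff_subset) <|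
      Finset.disjoint_union_left.2 ⟨hd1' N hN, hd2 N hN⟩
  · intro x
    rw [hsup]
    simp only [Finset.mem_sdiff, Finset.mem_insert, Finset.mem_singleton]
    have h1 : d x = ch ↔ x = d ch := by
      constructor
      · rintro rfl; exact (hinv x).symm
      · rintro rfl; exact hinv ch
    have h2 : d x = d ch ↔ x = ch := hinv.injective.eq_iff
    rw [hd x, h1, h2]
    tauto
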